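/- For all $n \geq 1$, the total number of rank sets for $G(k,n)$ summed over all dimensions equals the Stirling number of the second kind: the number of rank sets for $G(k,n)$ is $S(n+1, n-k+1)$, the number of set partitions of $\{1, \dots, n+1\}$ into $n-k+1$ nonempty blocks, for $1 \le k \le n$. -/

import Mathlib

/- STATEMENT 8: for 1 ≤ k ≤ n, the number of rank sets for G(k,n) equals the
Stirling number of the second kind S(n+1, n-k+1), the number of set partitions
of {1, …, n+1} into n-k+1 nonempty blocks. -/

open scoped Classical

/-- The nonempty intervals `[l, r] ⊆ {1, …, n}`, encoded as pairs `(l, r)`. -/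
def intervalsIn (n : ℕ) : Finset (ℕ × ℕ) :=
  (Finset.Icc 1 n ×ˢ Finset.Icc 1 n).filter fun p => p.1 ≤ p.2

/-- `M` is a rank set for `G(k,n)`: `k` nonempty intervals in `{1,…,n}` with
pairwise distinct left endpoints and pairwise distinct right endpoints. -/
def IsRankSet (k n : ℕ) (M : Finset (ℕ × ℕ)) : Prop :=
  M.card = k ∧ M ⊆ intervalsIn n ∧
    (∀ I ∈ M, ∀ J ∈ M, I.1 = J.1 → I = J) ∧
    (∀ I ∈ M, ∀ J ∈ M, I.2 = J.2 → I = J)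

/-- The collection of all rank sets for `G(k,n)`. -/
noncomputable def rankSets (k n : ℕ) : Finset (Finset (ℕ × ℕ)) :=
  (intervalsIn n).powerset.filter (IsRankSet k n)

/-- The Stirling number of the second kind `S(m, j)`: the number of set
partitions of an `m`-element set into `j` nonempty blocks.  A partition is
encoded as a finite set `P` of nonempty blocks such that every element lies in
exactly one block of `P`. -/
noncomputable def stirling2 (m j : ℕ) : ℕ :=
  Fintype.card {P : Finset (Finset (Fin m)) //
    (∀ b ∈ P, b ≠ ∅) ∧ (∀ x : Fin m, ∃! b, b ∈ P ∧ x ∈ b) ∧ P.card = j}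

open Finset

/-- Recursive Stirling numbers of the second kind. -/
def st : ℕ → ℕ → ℕ
  | 0, 0 => 1
  | 0, _ + 1 => 0
  | _ + 1, 0 => 0
  | m + 1, j + 1 => (j + 1) * st m (j + 1) + st m j

/-- Partitions of a finite set `s ⊆ ℕ` into `j` nonempty blocks. -/
noncomputable def partsOf (s : Finset ℕ) (j : ℕ) : Finset (Finset (Finset ℕ)) :=
  s.powerset.powerset.filter fun P =>
    (∀ b ∈ P, b ≠ ∅) ∧ (∀ x ∈ s, ∃! b, b ∈ P ∧ x ∈ b) ∧ P.card = j

lemma mem_partsOf {s : Finset ℕ} {j : ℕ} {P : Finset (Finset ℕ)} :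
    P ∈ partsOf s j ↔ (∀ b ∈ P, b ⊆ s) ∧ (∀ b ∈ P, b ≠ ∅) ∧
      (∀ x ∈ s, ∃! b, b ∈ P ∧ x ∈ b) ∧ P.card = j := by
  simp only [partsOf, mem_filter, mem_powerset, and_assoc]
  constructor
  · rintro ⟨h1, h2, h3, h4⟩
    exact ⟨fun b hb => mem_powerset.1 (h1 hb), h2, h3, h4⟩
  · rintro ⟨h1, h2, h3, h4⟩
    exact ⟨fun b hb => mem_powerset.2 (h1 b hb), h2, h3, h4⟩

lemma partsOf_empty_zero : partsOf ∅ 0 = {∅} := by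
  ext P
  simp only [mem_partsOf, mem_singleton]
  constructor
  · rintro ⟨-, -, -, h4⟩; exact card_eq_zero.1 h4
  · rintro rfl; simp

lemma partsOf_empty_succ (j : ℕ) : partsOf ∅ (j + 1) = ∅ := by
  ext P
  simp only [mem_partsOf, Finset.notMem_empty, iff_false, not_and]
  rintro h1 h2 - h4
  obtain ⟨b, hb⟩ := card_pos.1 (by omega : 0 < P.card)
  exact h2 b hb (subset_empty.1 (h1 b hb))

lemma partsOf_insert_zero {a : ℕ} {s : Finset ℕ} : partsOf (insert a s) 0 = ∅ := by
  ext P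
  simp only [mem_partsOf, Finset.notMem_empty, iff_false, not_and]
  rintro - - h3 h4
  rw [card_eq_zero] at h4
  subst h4
  obtain ⟨b, ⟨hb, -⟩, -⟩ := h3 a (mem_insert_self a s)
  exact absurd hb (Finset.notMem_empty b)

lemma notmem_of_partsOf {a : ℕ} {s : Finset ℕ} (ha : a ∉ s) {j : ℕ} {Q : Finset (Finset ℕ)}
    (hQ : Q ∈ partsOf s j) : ∀ b ∈ Q, a ∉ b := by
  intro b hb hab
  exact ha ((mem_partsOf.1 hQ).1 b hb hab)

lemma step2 {a : ℕ} {s : Finset ℕ} (ha : a ∉ s) (j : ℕ) :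
    ((partsOf (insert a s) (j+1)).filter fun P => {a} ∉ P).card
      = (j+1) * (partsOf s (j+1)).card := by
  classical
  have key : ((partsOf s (j+1)).sigma fun Q => Q).card
      = ((partsOf (insert a s) (j+1)).filter fun P => {a} ∉ P).card := by
    refine Finset.card_bij (fun qc _ => insert (insert a qc.2) (qc.1.erase qc.2)) ?_ ?_ ?_
    · rintro ⟨Q, c⟩ hqc
      rw [Finset.mem_sigma] at hqc
      obtain ⟨hQ, hc⟩ := hqc
      obtain ⟨hsub, hne, hpart, hcard⟩ := mem_partsOf.1 hQ
      have hna : ∀ b ∈ Q, a ∉ b := notmem_of_partsOf ha hQ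
      have hacQ : insert a c ∉ Q := fun h => hna _ h (mem_insert_self a c)
      rw [Finset.mem_filter]
      constructor
      · rw [mem_partsOf]
        refine ⟨?_, ?_, ?_, ?_⟩
        · intro b hb
          rcases Finset.mem_insert.1 hb with rfl | hb
          · exact Finset.insert_subset_insert a (hsub c hc)
          · exact (hsub b (Finset.mem_of_mem_erase hb)).trans (Finset.subset_insert a s)
        · intro b hb
          rcases Finset.mem_insert.1 hb with rfl | hb
          · exact Finset.insert_ne_empty a c
          · exact hne b (Finset.mem_of_mem_erase hb)
        · intro x hx
          rcases Finset.mem_insert.1 hx with hxa | hx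
          · refine ⟨insert a c, ⟨Finset.mem_insert_self _ _,
              by rw [hxa]; exact Finset.mem_insert_self a c⟩, ?_⟩
            rintro b ⟨hb, hxb⟩
            rcases Finset.mem_insert.1 hb with rfl | hb
            · rfl
            · rw [hxa] at hxb
              exact absurd hxb (hna b (Finset.mem_of_mem_erase hb))
          · obtain ⟨b, ⟨hbQ, hxb⟩, huniq⟩ := hpart x hx
            have hxa : x ≠ a := fun h => ha (h ▸ hx)
            by_cases hbc : b = c
            · refine ⟨insert a c, ⟨Finset.mem_insert_self _ _,
                Finset.mem_insert_of_mem (hbc ▸ hxb)⟩, ?_⟩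
              rintro b' ⟨hb', hxb'⟩
              rcases Finset.mem_insert.1 hb' with rfl | hb'
              · rfl
              · have hbb := huniq b' ⟨Finset.mem_of_mem_erase hb', hxb'⟩
                rw [hbc] at hbb
                exact absurd hbb (Finset.mem_erase.1 hb').1
            · refine ⟨b, ⟨Finset.mem_insert_of_mem (Finset.mem_erase.2 ⟨hbc, hbQ⟩), hxb⟩, ?_⟩
              rintro b' ⟨hb', hxb'⟩
              rcases Finset.mem_insert.1 hb' with rfl | hb'
              · rcases Finset.mem_insert.1 hxb' with rfl | hxc
                · exact absurd rfl hxa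
                · exact absurd (huniq c ⟨hc, hxc⟩).symm hbc
              · exact huniq b' ⟨Finset.mem_of_mem_erase hb', hxb'⟩
        · rw [Finset.card_insert_of_notMem (fun h => hacQ (Finset.mem_of_mem_erase h)),
            Finset.card_erase_of_mem hc, hcard]
          omega
      · -- {a} ∉ new P
        intro h
        rcases Finset.mem_insert.1 h with h | h
        · -- {a} = insert a c → c ⊆ {a}, but c nonempty ⊆ s, a ∉ s
          obtain ⟨x, hx⟩ := Finset.nonempty_iff_ne_empty.2 (hne c hc)
          have : x ∈ ({a} : Finset ℕ) := h ▸ Finset.mem_insert_of_mem hx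
          rw [Finset.mem_singleton] at this
          exact ha (this ▸ hsub c hc hx)
        · exact hna _ (Finset.mem_of_mem_erase h) (Finset.mem_singleton_self a)
    · -- injective
      rintro ⟨Q1, c1⟩ h1 ⟨Q2, c2⟩ h2 heq
      rw [Finset.mem_sigma] at h1 h2
      obtain ⟨hQ1, hc1⟩ := h1
      obtain ⟨hQ2, hc2⟩ := h2
      have hna1 := notmem_of_partsOf ha hQ1
      have hna2 := notmem_of_partsOf ha hQ2
      -- insert a c1 is a member of RHS; the only block of LHS containing a is insert a c2
      have heq' : insert (insert a c1) (Q1.erase c1) = insert (insert a c2) (Q2.erase c2) := heq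
      have hmem : insert a c1 ∈ insert (insert a c2) (Q2.erase c2) :=
        heq' ▸ Finset.mem_insert_self _ _
      have hcc : insert a c1 = insert a c2 := by
        rcases Finset.mem_insert.1 hmem with h | h
        · exact h
        · exact absurd (Finset.mem_insert_self a c1)
            (hna2 _ (Finset.mem_of_mem_erase h))
      have hc1a : a ∉ c1 := hna1 _ hc1
      have hc2a : a ∉ c2 := hna2 _ hc2
      have hceq : c1 = c2 := by
        have := congrArg (·.erase a) hcc
        simpa [Finset.erase_insert hc1a, Finset.erase_insert hc2a] using this
      subst hceq
      have hni1 : insert a c1 ∉ Q1.erase c1 := fun h => hna1 _ (Finset.mem_of_mem_erase h)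
        (Finset.mem_insert_self _ _)
      have hni2 : insert a c1 ∉ Q2.erase c1 := fun h => hna2 _ (Finset.mem_of_mem_erase h)
        (Finset.mem_insert_self _ _)
      have herase : Q1.erase c1 = Q2.erase c1 := by
        have := congrArg (·.erase (insert a c1)) heq'
        simpa [Finset.erase_insert hni1, Finset.erase_insert hni2] using this
      have hQQ : Q1 = Q2 := by
        have h1' : c1 ∈ Q1 := hc1
        have h2' : c1 ∈ Q2 := hc2
        rw [← Finset.insert_erase h1', ← Finset.insert_erase h2', herase]
      subst hQQ
      rfl
    · -- surjective
      rintro P hP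
      rw [Finset.mem_filter] at hP
      obtain ⟨hP, hsing⟩ := hP
      obtain ⟨hsub, hne, hpart, hcard⟩ := mem_partsOf.1 hP
      obtain ⟨b, ⟨hbP, hab⟩, huniq⟩ := hpart a (Finset.mem_insert_self a s)
      have hbne : b ≠ {a} := fun h => hsing (h ▸ hbP)
      have hbae : b.erase a ≠ ∅ := by
        intro h
        apply hbne
        ext x
        simp only [Finset.mem_singleton]
        constructor
        · intro hx
          by_contra hxa
          exact absurd (Finset.mem_erase.2 ⟨hxa, hx⟩) (h ▸ Finset.notMem_empty x)
        · rintro rfl; exact hab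
      have hbeP : b.erase a ∉ P := by
        intro h
        obtain ⟨x, hx⟩ := Finset.nonempty_iff_ne_empty.2 hbae
        obtain ⟨hxa, hxb⟩ := Finset.mem_erase.1 hx
        obtain ⟨b', ⟨hb'P, hxb'⟩, huniq'⟩ := hpart x (hsub b hbP hxb)
        have e1 : b.erase a = b' := huniq' _ ⟨h, hx⟩
        have e2 : b = b' := huniq' _ ⟨hbP, hxb⟩
        rw [← e2] at e1
        rw [← e1] at hab
        exact Finset.notMem_erase a b hab
      have hQmem : insert (b.erase a) (P.erase b) ∈ partsOf s (j + 1) := by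
        rw [mem_partsOf]
        refine ⟨?_, ?_, ?_, ?_⟩
        · intro c hc
          rcases Finset.mem_insert.1 hc with rfl | hc
          · intro x hx
            obtain ⟨hxa, hxb⟩ := Finset.mem_erase.1 hx
            rcases Finset.mem_insert.1 (hsub b hbP hxb) with h | h
            · exact absurd h hxa
            · exact h
          · intro x hx
            have hcP := Finset.mem_of_mem_erase hc
            rcases Finset.mem_insert.1 (hsub _ hcP hx) with hax | h
            · rw [hax] at hx
              exact absurd (huniq _ ⟨hcP, hx⟩) (Finset.mem_erase.1 hc).1
            · exact h
        · intro c hc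
          rcases Finset.mem_insert.1 hc with rfl | hc
          · exact hbae
          · exact hne _ (Finset.mem_of_mem_erase hc)
        · intro x hx
          have hxa : x ≠ a := fun h => ha (h ▸ hx)
          obtain ⟨c, ⟨hcP, hxc⟩, huniq'⟩ := hpart x (Finset.mem_insert_of_mem hx)
          by_cases hcb : c = b
          · refine ⟨b.erase a, ⟨Finset.mem_insert_self _ _,
              Finset.mem_erase.2 ⟨hxa, hcb ▸ hxc⟩⟩, ?_⟩
            rintro c' ⟨hc', hxc'⟩
            rcases Finset.mem_insert.1 hc' with rfl | hc'
            · rfl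
            · have h2 := huniq' _ ⟨Finset.mem_of_mem_erase hc', hxc'⟩
              rw [hcb] at h2
              exact absurd h2 (Finset.mem_erase.1 hc').1
          · refine ⟨c, ⟨Finset.mem_insert_of_mem (Finset.mem_erase.2 ⟨hcb, hcP⟩), hxc⟩, ?_⟩
            rintro c' ⟨hc', hxc'⟩
            rcases Finset.mem_insert.1 hc' with rfl | hc'
            · exact absurd (huniq' b ⟨hbP, Finset.mem_of_mem_erase hxc'⟩).symm hcb
            · exact huniq' _ ⟨Finset.mem_of_mem_erase hc', hxc'⟩
        · rw [Finset.card_insert_of_notMem (fun h => hbeP (Finset.mem_of_mem_erase h)),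
            Finset.card_erase_of_mem hbP, hcard]
          omega
      refine ⟨⟨insert (b.erase a) (P.erase b), b.erase a⟩,
        Finset.mem_sigma.2 ⟨hQmem, Finset.mem_insert_self _ _⟩, ?_⟩
      show insert (insert a (b.erase a)) ((insert (b.erase a) (P.erase b)).erase (b.erase a)) = P
      rw [Finset.erase_insert (fun h => hbeP (Finset.mem_of_mem_erase h))]
      rw [Finset.insert_erase hab, Finset.insert_erase hbP]
  rw [← key, Finset.card_sigma]
  rw [Finset.sum_congr rfl (fun Q hQ => (mem_partsOf.1 hQ).2.2.2)]
  rw [Finset.sum_const, smul_eq_mul, mul_comm]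

lemma step1 {a : ℕ} {s : Finset ℕ} (ha : a ∉ s) (j : ℕ) :
    ((partsOf (insert a s) (j+1)).filter fun P => {a} ∈ P).card = (partsOf s j).card := by
  classical
  refine Finset.card_nbij' (fun P => P.erase {a}) (fun Q => insert {a} Q) ?_ ?_ ?_ ?_
  · intro P hP
    rw [Finset.mem_coe, Finset.mem_filter] at hP
    obtain ⟨hP, hsa⟩ := hP
    obtain ⟨hsub, hne, hpart, hcard⟩ := mem_partsOf.1 hP
    have hna : ∀ b ∈ P, b ≠ ({a} : Finset ℕ) → a ∉ b := by
      intro b hb hbne hab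
      obtain ⟨b', ⟨hb', hab'⟩, huniq⟩ := hpart a (Finset.mem_insert_self a s)
      exact hbne ((huniq b ⟨hb, hab⟩).trans (huniq {a} ⟨hsa, Finset.mem_singleton_self a⟩).symm)
    rw [Finset.mem_coe, mem_partsOf]
    refine ⟨?_, ?_, ?_, ?_⟩
    · intro b hb
      obtain ⟨hbne, hbP⟩ := Finset.mem_erase.1 hb
      intro x hx
      rcases Finset.mem_insert.1 (hsub b hbP hx) with hax | h
      · exact absurd (hax ▸ hx) (hna b hbP hbne)
      · exact h
    · exact fun b hb => hne b (Finset.mem_of_mem_erase hb)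
    · intro x hx
      have hxa : x ≠ a := fun h => ha (h ▸ hx)
      obtain ⟨b, ⟨hbP, hxb⟩, huniq⟩ := hpart x (Finset.mem_insert_of_mem hx)
      have hbne : b ≠ {a} := by
        rintro rfl
        exact hxa (Finset.mem_singleton.1 hxb)
      exact ⟨b, ⟨Finset.mem_erase.2 ⟨hbne, hbP⟩, hxb⟩,
        fun b' ⟨hb', hxb'⟩ => huniq b' ⟨Finset.mem_of_mem_erase hb', hxb'⟩⟩
    · rw [Finset.card_erase_of_mem hsa, hcard]
      omega
  · intro Q hQ
    obtain ⟨hsub, hne, hpart, hcard⟩ := mem_partsOf.1 hQ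
    have hsaQ : ({a} : Finset ℕ) ∉ Q := fun h => ha (hsub _ h (Finset.mem_singleton_self a))
    have hna : ∀ b ∈ Q, a ∉ b := fun b hb hab => ha (hsub b hb hab)
    rw [Finset.mem_coe, Finset.mem_filter]
    refine ⟨?_, Finset.mem_insert_self _ _⟩
    rw [mem_partsOf]
    refine ⟨?_, ?_, ?_, ?_⟩
    · intro b hb
      rcases Finset.mem_insert.1 hb with rfl | hb
      · intro x hx
        exact Finset.mem_singleton.1 hx ▸ Finset.mem_insert_self a s
      · exact (hsub b hb).trans (Finset.subset_insert a s)
    · intro b hb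
      rcases Finset.mem_insert.1 hb with rfl | hb
      · exact Finset.singleton_ne_empty a
      · exact hne b hb
    · intro x hx
      rcases Finset.mem_insert.1 hx with hxa | hx
      · refine ⟨{a}, ⟨Finset.mem_insert_self _ _,
          by rw [hxa]; exact Finset.mem_singleton_self a⟩, ?_⟩
        rintro b' ⟨hb', hxb'⟩
        rcases Finset.mem_insert.1 hb' with rfl | hb'
        · rfl
        · rw [hxa] at hxb'
          exact absurd hxb' (hna b' hb')
      · obtain ⟨b, ⟨hbQ, hxb⟩, huniq⟩ := hpart x hx
        have hxa : x ≠ a := fun h => ha (h ▸ hx)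
        refine ⟨b, ⟨Finset.mem_insert_of_mem hbQ, hxb⟩, ?_⟩
        rintro b' ⟨hb', hxb'⟩
        rcases Finset.mem_insert.1 hb' with rfl | hb'
        · exact absurd (Finset.mem_singleton.1 hxb') hxa
        · exact huniq b' ⟨hb', hxb'⟩
    · rw [Finset.card_insert_of_notMem hsaQ, hcard]
  · intro P hP
    rw [Finset.mem_coe, Finset.mem_filter] at hP
    exact Finset.insert_erase hP.2
  · intro Q hQ
    exact Finset.erase_insert
      (fun h => ha ((mem_partsOf.1 hQ).1 _ h (Finset.mem_singleton_self a)))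

lemma partsOf_insert_succ {a : ℕ} {s : Finset ℕ} (ha : a ∉ s) (j : ℕ) :
    (partsOf (insert a s) (j+1)).card
      = (j+1) * (partsOf s (j+1)).card + (partsOf s j).card := by
  classical
  rw [← Finset.card_filter_add_card_filter_not
    (s := partsOf (insert a s) (j+1)) (p := fun P => {a} ∉ P)]
  have h1 : ((partsOf (insert a s) (j+1)).filter fun P => ¬ {a} ∉ P)
      = (partsOf (insert a s) (j+1)).filter fun P => {a} ∈ P := by
    apply Finset.filter_congr; intro P _; simp
  rw [h1, step1 ha j, step2 ha j]

lemma card_partsOf (s : Finset ℕ) (j : ℕ) : (partsOf s j).card = st s.card j := by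
  classical
  induction s using Finset.induction_on generalizing j with
  | empty =>
    cases j with
    | zero => rw [partsOf_empty_zero]; simp [st]
    | succ j => rw [partsOf_empty_succ]; simp [st]
  | insert a s ha ih =>
    cases j with
    | zero =>
      rw [partsOf_insert_zero]
      rw [Finset.card_insert_of_notMem ha]
      simp [st]
    | succ j =>
      rw [partsOf_insert_succ ha j, Finset.card_insert_of_notMem ha, ih, ih]
      rfl

lemma image_val_attachFin (b : Finset ℕ) {m : ℕ} (H : ∀ x ∈ b, x < m) :
    (b.attachFin H).image Fin.val = b := by
  ext x
  simp only [Finset.mem_image, Finset.mem_attachFin]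
  constructor
  · rintro ⟨y, hy, rfl⟩; exact hy
  · intro hx; exact ⟨⟨x, H x hx⟩, hx, rfl⟩

lemma stirling2_eq (m j : ℕ) : stirling2 m j = (partsOf (Finset.range m) j).card := by
  classical
  rw [stirling2, Fintype.card_subtype]
  refine Finset.card_bij (fun P _ => P.image (Finset.image Fin.val)) ?_ ?_ ?_
  · intro P hP
    rw [Finset.mem_filter] at hP
    obtain ⟨-, hne, hpart, hcard⟩ := hP
    rw [mem_partsOf]
    refine ⟨?_, ?_, ?_, ?_⟩
    · intro b hb
      obtain ⟨b0, hb0, rfl⟩ := Finset.mem_image.1 hb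
      intro x hx
      obtain ⟨y, hy, rfl⟩ := Finset.mem_image.1 hx
      exact Finset.mem_range.2 y.isLt
    · intro b hb
      obtain ⟨b0, hb0, rfl⟩ := Finset.mem_image.1 hb
      intro h
      exact hne b0 hb0 (Finset.image_eq_empty.1 h)
    · intro x hx
      have hxm : x < m := Finset.mem_range.1 hx
      obtain ⟨b, ⟨hbP, hxb⟩, huniq⟩ := hpart ⟨x, hxm⟩
      refine ⟨b.image Fin.val, ⟨Finset.mem_image_of_mem _ hbP,
        Finset.mem_image_of_mem _ hxb⟩, ?_⟩
      rintro b' ⟨hb', hxb'⟩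
      obtain ⟨b0, hb0, rfl⟩ := Finset.mem_image.1 hb'
      obtain ⟨y, hy, hyx⟩ := Finset.mem_image.1 hxb'
      have : y = ⟨x, hxm⟩ := Fin.ext hyx
      rw [this] at hy
      rw [huniq b0 ⟨hb0, hy⟩]
    · rw [Finset.card_image_of_injective P (Finset.image_injective Fin.val_injective), hcard]
  · intro P1 h1 P2 h2 heq
    exact Finset.image_injective (Finset.image_injective Fin.val_injective) heq
  · intro Q hQ
    obtain ⟨hsub, hne, hpart, hcard⟩ := mem_partsOf.1 hQ
    have hH : ∀ b : {b // b ∈ Q}, ∀ x ∈ b.1, x < m :=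
      fun b x hx => Finset.mem_range.1 (hsub b.1 b.2 hx)
    set g : {b // b ∈ Q} → Finset (Fin m) := fun b => b.1.attachFin (hH b) with hg
    have hgval : ∀ b : {b // b ∈ Q}, (g b).image Fin.val = b.1 :=
      fun b => image_val_attachFin b.1 (hH b)
    have hginj : Function.Injective g := by
      intro b1 b2 h
      apply Subtype.ext
      rw [← hgval b1, ← hgval b2, h]
    refine ⟨Q.attach.image g, ?_, ?_⟩
    · rw [Finset.mem_filter]
      refine ⟨Finset.mem_univ _, ?_, ?_, ?_⟩
      · intro b hb
        obtain ⟨b0, hb0, rfl⟩ := Finset.mem_image.1 hb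
        intro h
        apply hne b0.1 b0.2
        rw [← hgval b0, h, Finset.image_empty]
      · intro x
        obtain ⟨b, ⟨hbQ, hxb⟩, huniq⟩ := hpart x.1 (Finset.mem_range.2 x.isLt)
        refine ⟨g ⟨b, hbQ⟩, ⟨Finset.mem_image_of_mem g (Finset.mem_attach Q ⟨b, hbQ⟩),
          (Finset.mem_attachFin _).2 hxb⟩, ?_⟩
        rintro b' ⟨hb', hxb'⟩
        obtain ⟨b0, -, rfl⟩ := Finset.mem_image.1 hb'
        have hxb0 : x.1 ∈ b0.1 := (Finset.mem_attachFin _).1 hxb'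
        have : b0.1 = b := huniq b0.1 ⟨b0.2, hxb0⟩
        congr 1
        exact Subtype.ext this
      · rw [Finset.card_image_of_injective _ hginj, Finset.card_attach, hcard]
    · show (Q.attach.image g).image (Finset.image Fin.val) = Q
      rw [Finset.image_image]
      have : (Finset.image Fin.val ∘ g) = fun b : {b // b ∈ Q} => b.1 := funext hgval
      rw [this]
      exact Finset.attach_image_val

lemma stirling2_eq_st (m j : ℕ) : stirling2 m j = st m j := by
  rw [stirling2_eq, card_partsOf, Finset.card_range]

lemma mem_intervalsIn {n : ℕ} {I : ℕ × ℕ} :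
    I ∈ intervalsIn n ↔ 1 ≤ I.1 ∧ I.1 ≤ I.2 ∧ I.2 ≤ n := by
  simp only [intervalsIn, Finset.mem_filter, Finset.mem_product, Finset.mem_Icc]
  omega

lemma mem_rankSets {k n : ℕ} {M : Finset (ℕ × ℕ)} :
    M ∈ rankSets k n ↔ IsRankSet k n M := by
  rw [rankSets, Finset.mem_filter, Finset.mem_powerset]
  exact ⟨fun h => h.2, fun h => ⟨h.2.1, h⟩⟩

lemma rankSets_zero (n : ℕ) : rankSets 0 n = {∅} := by
  ext M
  rw [mem_rankSets, Finset.mem_singleton]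
  constructor
  · intro h; exact Finset.card_eq_zero.1 h.1
  · rintro rfl
    exact ⟨rfl, Finset.empty_subset _, by simp, by simp⟩

lemma rankSets_eq_empty {k n : ℕ} (h : n < k) : rankSets k n = ∅ := by
  ext M
  simp only [Finset.notMem_empty, iff_false]
  rw [mem_rankSets]
  rintro ⟨hcard, hsub, hleft, -⟩
  have hinj : Set.InjOn Prod.fst M := fun I hI J hJ hh => hleft I hI J hJ hh
  have h1 : (M.image Prod.fst).card = k := by
    rw [Finset.card_image_of_injOn hinj, hcard]
  have h2 : M.image Prod.fst ⊆ Finset.Icc 1 n := by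
    intro x hx
    obtain ⟨I, hI, rfl⟩ := Finset.mem_image.1 hx
    have hm := mem_intervalsIn.1 (hsub hI)
    exact Finset.mem_Icc.2 ⟨hm.1, hm.2.1.trans hm.2.2⟩
  have := Finset.card_le_card h2
  rw [h1, Nat.card_Icc] at this
  omega

lemma rank_step1 (k n : ℕ) :
    ((rankSets (k+1) (n+1)).filter fun M => ∀ I ∈ M, I.2 ≠ n+1)
      = rankSets (k+1) n := by
  classical
  ext M
  rw [Finset.mem_filter, mem_rankSets, mem_rankSets]
  constructor
  · rintro ⟨⟨hcard, hsub, hl, hr⟩, hno⟩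
    refine ⟨hcard, ?_, hl, hr⟩
    intro I hI
    have h := mem_intervalsIn.1 (hsub hI)
    have h2 := hno I hI
    exact mem_intervalsIn.2 ⟨h.1, h.2.1, by omega⟩
  · rintro ⟨hcard, hsub, hl, hr⟩
    refine ⟨⟨hcard, ?_, hl, hr⟩, ?_⟩
    · intro I hI
      have h := mem_intervalsIn.1 (hsub hI)
      exact mem_intervalsIn.2 ⟨h.1, h.2.1, by omega⟩
    · intro I hI
      have h := mem_intervalsIn.1 (hsub hI)
      omega

lemma rank_step2 (k n : ℕ) :
    ((rankSets (k+1) (n+1)).filter fun M => ¬ ∀ I ∈ M, I.2 ≠ n+1).card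
      = (n+1-k) * (rankSets k n).card := by
  classical
  have key : ((rankSets k n).sigma fun M' =>
        Finset.Icc 1 (n+1) \ M'.image Prod.fst).card
      = ((rankSets (k+1) (n+1)).filter fun M => ¬ ∀ I ∈ M, I.2 ≠ n+1).card := by
    refine Finset.card_bij (fun ml _ => insert (ml.2, n+1) ml.1) ?_ ?_ ?_
    · rintro ⟨M', l⟩ hml
      rw [Finset.mem_sigma] at hml
      obtain ⟨hM', hlm⟩ := hml
      obtain ⟨hcard, hsub, hl, hr⟩ := mem_rankSets.1 hM'
      have hlm' : l ∈ Finset.Icc 1 (n+1) ∧ l ∉ M'.image Prod.fst := by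
        have := Finset.mem_sdiff.1 hlm; exact this
      obtain ⟨hlI, hlf⟩ := hlm'
      rw [Finset.mem_Icc] at hlI
      have hsnd : ∀ J ∈ M', J.2 ≤ n := fun J hJ => (mem_intervalsIn.1 (hsub hJ)).2.2
      have hnotmem : (l, n+1) ∉ M' := fun h => by have := hsnd _ h; omega
      rw [Finset.mem_filter]
      refine ⟨mem_rankSets.2 ⟨?_, ?_, ?_, ?_⟩, ?_⟩
      · rw [Finset.card_insert_of_notMem hnotmem, hcard]
      · intro J hJ
        rcases Finset.mem_insert.1 hJ with rfl | hJ
        · exact mem_intervalsIn.2 ⟨hlI.1, by simpa using hlI.2, le_refl _⟩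
        · have h := mem_intervalsIn.1 (hsub hJ)
          exact mem_intervalsIn.2 ⟨h.1, h.2.1, by omega⟩
      · intro I hI J hJ hIJ
        rcases Finset.mem_insert.1 hI with rfl | hI <;>
          rcases Finset.mem_insert.1 hJ with rfl | hJ
        · rfl
        · exact absurd (Finset.mem_image.2 ⟨J, hJ, hIJ.symm⟩) hlf
        · exact absurd (Finset.mem_image.2 ⟨I, hI, hIJ⟩) hlf
        · exact hl I hI J hJ hIJ
      · intro I hI J hJ hIJ
        rcases Finset.mem_insert.1 hI with rfl | hI <;>
          rcases Finset.mem_insert.1 hJ with rfl | hJ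
        · rfl
        · exact absurd hIJ (by have := hsnd _ hJ; simp; omega)
        · exact absurd hIJ (by have := hsnd _ hI; simp; omega)
        · exact hr I hI J hJ hIJ
      · intro h
        exact h (l, n+1) (Finset.mem_insert_self _ _) rfl
    · rintro ⟨M1, l1⟩ h1 ⟨M2, l2⟩ h2 heq
      rw [Finset.mem_sigma] at h1 h2
      obtain ⟨hM1, hl1⟩ := h1
      obtain ⟨hM2, hl2⟩ := h2
      have hsnd1 : ∀ J ∈ M1, J.2 ≤ n :=
        fun J hJ => (mem_intervalsIn.1 ((mem_rankSets.1 hM1).2.1 hJ)).2.2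
      have hsnd2 : ∀ J ∈ M2, J.2 ≤ n :=
        fun J hJ => (mem_intervalsIn.1 ((mem_rankSets.1 hM2).2.1 hJ)).2.2
      have heq' : insert (l1, n+1) M1 = insert (l2, n+1) M2 := heq
      have hmem : ((l1, n+1) : ℕ × ℕ) ∈ insert (l2, n+1) M2 :=
        heq' ▸ Finset.mem_insert_self _ _
      have hll : l1 = l2 := by
        rcases Finset.mem_insert.1 hmem with h | h
        · exact congrArg Prod.fst h
        · exact absurd (hsnd2 _ h) (by simp)
      subst hll
      have hn1 : ((l1, n+1) : ℕ × ℕ) ∉ M1 := fun h => by have := hsnd1 _ h; omega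
      have hn2 : ((l1, n+1) : ℕ × ℕ) ∉ M2 := fun h => by have := hsnd2 _ h; omega
      have hMM : M1 = M2 := by
        have := congrArg (·.erase ((l1, n+1) : ℕ × ℕ)) heq'
        simpa [Finset.erase_insert hn1, Finset.erase_insert hn2] using this
      subst hMM
      rfl
    · intro M hM
      rw [Finset.mem_filter] at hM
      obtain ⟨hM, hex⟩ := hM
      push_neg at hex
      obtain ⟨I, hI, hI2⟩ := hex
      obtain ⟨hcard, hsub, hl, hr⟩ := mem_rankSets.1 hM
      have hIval : I = (I.1, n+1) := by rw [← hI2]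
      have hM'mem : M.erase I ∈ rankSets k n := by
        refine mem_rankSets.2 ⟨?_, ?_, ?_, ?_⟩
        · rw [Finset.card_erase_of_mem hI, hcard]; omega
        · intro J hJ
          have hJM := Finset.mem_of_mem_erase hJ
          have h := mem_intervalsIn.1 (hsub hJM)
          have hJ2 : J.2 ≠ n+1 := by
            intro hc
            exact (Finset.mem_erase.1 hJ).1 (hr J hJM I hI (by omega))
          exact mem_intervalsIn.2 ⟨h.1, h.2.1, by omega⟩
        · intro A hA B hB
          exact hl A (Finset.mem_of_mem_erase hA) B (Finset.mem_of_mem_erase hB)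
        · intro A hA B hB
          exact hr A (Finset.mem_of_mem_erase hA) B (Finset.mem_of_mem_erase hB)
      have hlmem : I.1 ∈ Finset.Icc 1 (n+1) \ (M.erase I).image Prod.fst := by
        rw [Finset.mem_sdiff]
        constructor
        · have h := mem_intervalsIn.1 (hsub hI)
          exact Finset.mem_Icc.2 ⟨h.1, by omega⟩
        · intro hc
          obtain ⟨J, hJ, hJ1⟩ := Finset.mem_image.1 hc
          exact (Finset.mem_erase.1 hJ).1
            (hl J (Finset.mem_of_mem_erase hJ) I hI hJ1)
      refine ⟨⟨M.erase I, I.1⟩, Finset.mem_sigma.2 ⟨hM'mem, hlmem⟩, ?_⟩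
      show insert (I.1, n+1) (M.erase I) = M
      rw [← hIval, Finset.insert_erase hI]
  rw [← key, Finset.card_sigma]
  have hconst : ∀ M' ∈ rankSets k n,
      (Finset.Icc 1 (n+1) \ M'.image Prod.fst).card = n+1-k := by
    intro M' hM'
    obtain ⟨hcard, hsub, hl, -⟩ := mem_rankSets.1 hM'
    have hinj : Set.InjOn Prod.fst M' := fun A hA B hB hh => hl A hA B hB hh
    have h1 : (M'.image Prod.fst).card = k := by
      rw [Finset.card_image_of_injOn hinj, hcard]
    have h2 : M'.image Prod.fst ⊆ Finset.Icc 1 (n+1) := by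
      intro x hx
      obtain ⟨I, hI, rfl⟩ := Finset.mem_image.1 hx
      have h := mem_intervalsIn.1 (hsub hI)
      exact Finset.mem_Icc.2 ⟨h.1, by omega⟩
    rw [Finset.card_sdiff_of_subset h2, h1, Nat.card_Icc]
    omega
  rw [Finset.sum_congr rfl hconst, Finset.sum_const, smul_eq_mul, mul_comm]

lemma rank_rec (k n : ℕ) :
    (rankSets (k+1) (n+1)).card
      = (n+1-k) * (rankSets k n).card + (rankSets (k+1) n).card := by
  classical
  have g : ((rankSets (k+1) (n+1)).filter fun M => ∀ I ∈ M, I.2 ≠ n+1).card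
      + ((rankSets (k+1) (n+1)).filter fun M => ¬ ∀ I ∈ M, I.2 ≠ n+1).card
      = (rankSets (k+1) (n+1)).card :=
    Finset.card_filter_add_card_filter_not _
  rw [rank_step1, rank_step2] at g
  omega

lemma st_succ (m j : ℕ) : st (m+1) (j+1) = (j+1) * st m (j+1) + st m j := rfl

lemma st_eq_zero_of_lt : ∀ (m j : ℕ), m < j → st m j = 0 := by
  intro m
  induction m with
  | zero => intro j hj; cases j with | zero => omega | succ j => rfl
  | succ m ih =>
    intro j hj
    cases j with
    | zero => omega
    | succ j =>
      rw [st_succ, ih (j+1) (by omega), ih j (by omega)]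
      ring

lemma st_self (m : ℕ) : st m m = 1 := by
  induction m with
  | zero => rfl
  | succ m ih =>
    rw [st_succ, st_eq_zero_of_lt m (m+1) (by omega), ih]
    ring

theorem card_rankSets_eq_stirling (k n : ℕ) (hk : 1 ≤ k) (hkn : k ≤ n) :
    (rankSets k n).card = stirling2 (n + 1) (n - k + 1) := by
  rw [stirling2_eq_st]
  induction n generalizing k with
  | zero => omega
  | succ n ih =>
    obtain ⟨k, rfl⟩ : ∃ k', k = k' + 1 := ⟨k - 1, by omega⟩
    have hkn' : k ≤ n := by omega
    rw [rank_rec]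
    have e1 : n + 1 - (k + 1) + 1 = (n - k) + 1 := by omega
    rw [e1, st_succ]
    have hterm1 : (n + 1 - k) * (rankSets k n).card
        = (n - k + 1) * st (n + 1) (n - k + 1) := by
      rcases Nat.eq_zero_or_pos k with rfl | hkpos
      · rw [rankSets_zero, Finset.card_singleton]
        simp [st_self]
      · rw [ih k hkpos hkn']
        congr 1
        omega
    have hterm2 : (rankSets (k + 1) n).card = st (n + 1) (n - k) := by
      rcases Nat.lt_or_ge k n with hlt | hge
      · have := ih (k + 1) (by omega) (by omega)
        rw [this]
        congr 1
        omega
      · have hkn2 : k = n := by omega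
        subst hkn2
        rw [rankSets_eq_empty (by omega), Finset.card_empty]
        simp
        rfl
    rw [hterm1, hterm2]
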